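/- arXiv:0808.2268 — 4 statements merged into one kernel-verified Lean document; each statement's English description precedes it below -/
import Mathlib

section
/- Let ν_p be the product Bernoulli(p) measure on 𝔽₂^ℕ (each coordinate equal to 1 with probability p, independently), and let η be uniform on 𝔽₂ independent of z ∼ ν_p. Let μ_p be the law on {0,1}^(𝔽₂^(⊕ℕ)) of the function x ↦ 1[⟨x,z⟩ + η = 0]. Then μ_p is invariant under the coordinate-permuting action of the group Γ generated by finitely supported permutations of ℕ and by all bit-flips x ↦ x + eᵢ. -/
open MeasureTheory

/-- The group generated by finitely supported coordinate permutations of `ℕ` and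
bit-flips, acting on `T = 𝔽₂^(⊕ℕ)`. -/
def cubeGroup : Subgroup (Equiv.Perm (ℕ →₀ ZMod 2)) :=
  Subgroup.closure
    ({e | ∃ π : Equiv.Perm ℕ, {i | π i ≠ i}.Finite ∧ e = Finsupp.equivCongrLeft π} ∪
     {e | ∃ i : ℕ, e = Equiv.addLeft (Finsupp.single i 1)})

/-- The pairing `⟨x,z⟩ = ∑ᵢ xᵢzᵢ` (a finite sum since `x` is finitely supported). -/
def cubePair (x : ℕ →₀ ZMod 2) (z : ℕ → ZMod 2) : ZMod 2 :=
  ∑ i ∈ x.support, x i * z i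

/-- `ν` is the product Bernoulli(`p`) measure on `𝔽₂^ℕ`: each coordinate equals `1`
with probability `p`, independently. -/
def IsBernoulliProduct (p : ℝ) (ν : Measure (ℕ → ZMod 2)) : Prop :=
  IsProbabilityMeasure ν ∧
    ∀ (s : Finset ℕ) (f : ℕ → ZMod 2),
      ν {z | ∀ i ∈ s, z i = f i} =
        ∏ i ∈ s, if f i = 1 then ENNReal.ofReal p else ENNReal.ofReal (1 - p)

/-! ### Auxiliary lemmas -/

section Aux

lemma cubePair_eq_sum (x : ℕ →₀ ZMod 2) (z : ℕ → ZMod 2) :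
    cubePair x z = x.sum fun i a => a * z i := rfl

lemma cubePair_equivMapDomain (π : Equiv.Perm ℕ) (x : ℕ →₀ ZMod 2) (z : ℕ → ZMod 2) :
    cubePair (Finsupp.equivMapDomain π x) z = cubePair x (z ∘ π) := by
  rw [cubePair_eq_sum, cubePair_eq_sum, Finsupp.equivMapDomain_eq_mapDomain,
    Finsupp.sum_mapDomain_index (by simp) (fun b m₁ m₂ => add_mul m₁ m₂ (z b))]
  rfl

lemma cubePair_add (x y : ℕ →₀ ZMod 2) (z : ℕ → ZMod 2) :
    cubePair (x + y) z = cubePair x z + cubePair y z := by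
  rw [cubePair_eq_sum, cubePair_eq_sum, cubePair_eq_sum]
  exact Finsupp.sum_add_index' (by simp) (fun a b₁ b₂ => add_mul b₁ b₂ (z a))

lemma cubePair_single (i : ℕ) (z : ℕ → ZMod 2) :
    cubePair (Finsupp.single i 1) z = z i := by
  rw [cubePair_eq_sum, Finsupp.sum_single_index (by simp), one_mul]

/-- The cylinder sets on `𝔽₂^ℕ`. -/
def cylSets : Set (Set (ℕ → ZMod 2)) :=
  {S | ∃ (s : Finset ℕ) (f : ℕ → ZMod 2), S = {z | ∀ i ∈ s, z i = f i}}

lemma cylSets_measurableSet {S : Set (ℕ → ZMod 2)} (hS : S ∈ cylSets) :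
    MeasurableSet S := by
  obtain ⟨s, f, rfl⟩ := hS
  have : {z : ℕ → ZMod 2 | ∀ i ∈ s, z i = f i} = ⋂ i ∈ s, (fun z => z i) ⁻¹' {f i} := by
    ext z; simp
  rw [this]
  exact MeasurableSet.biInter s.countable_toSet fun i _ =>
    (measurable_pi_apply i) (MeasurableSet.singleton (f i))

lemma generateFrom_cylSets :
    (MeasurableSpace.pi : MeasurableSpace (ℕ → ZMod 2)) =
      MeasurableSpace.generateFrom cylSets := by
  refine le_antisymm ?_ (MeasurableSpace.generateFrom_le fun S hS => cylSets_measurableSet hS)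
  refine iSup_le fun i => Measurable.comap_le ?_
  intro t _
  have : (fun z : ℕ → ZMod 2 => z i) ⁻¹' t
      = ⋃ a ∈ t, {z : ℕ → ZMod 2 | ∀ j ∈ ({i} : Finset ℕ), z j = a} := by
    ext z; simp
  rw [this]
  exact MeasurableSet.biUnion t.to_countable fun a _ =>
    MeasurableSpace.measurableSet_generateFrom ⟨{i}, fun _ => a, rfl⟩

lemma isPiSystem_cylSets : IsPiSystem cylSets := by
  rintro S₁ ⟨s, f, rfl⟩ S₂ ⟨t, g, rfl⟩ hne
  obtain ⟨z₀, hz₀f, hz₀g⟩ := hne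
  classical
  refine ⟨s ∪ t, fun i => if i ∈ s then f i else g i, ?_⟩
  ext z
  simp only [Set.mem_inter_iff, Set.mem_setOf_eq, Finset.mem_union]
  constructor
  · rintro ⟨h1, h2⟩ i hi
    rcases hi with hi | hi
    · simp [hi, h1 i hi]
    · by_cases his : i ∈ s
      · simp [his, h1 i his]
      · simp [his, h2 i hi]
  · intro h
    constructor
    · intro i hi
      have := h i (Or.inl hi); simpa [hi] using this
    · intro i hi
      have := h i (Or.inr hi)
      by_cases his : i ∈ s
      · rw [if_pos his] at this
        rw [this, ← hz₀f i his, hz₀g i hi]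
      · rwa [if_neg his] at this

lemma bernoulliProduct_unique {p : ℝ} {ν₁ ν₂ : Measure (ℕ → ZMod 2)}
    (h₁ : IsBernoulliProduct p ν₁) (h₂ : IsBernoulliProduct p ν₂) : ν₁ = ν₂ := by
  have := h₁.1
  refine ext_of_generate_finite cylSets generateFrom_cylSets isPiSystem_cylSets ?_ ?_
  · rintro S ⟨s, f, rfl⟩
    rw [h₁.2 s f, h₂.2 s f]
  · rw [h₁.1.measure_univ, h₂.1.measure_univ]

lemma measurable_comp_perm (π : Equiv.Perm ℕ) :
    Measurable fun z : ℕ → ZMod 2 => z ∘ π :=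
  measurable_pi_lambda _ fun i => measurable_pi_apply (π i)

lemma map_perm_isBernoulliProduct {p : ℝ} {ν : Measure (ℕ → ZMod 2)}
    (hν : IsBernoulliProduct p ν) (π : Equiv.Perm ℕ) :
    IsBernoulliProduct p (Measure.map (fun z => z ∘ π) ν) := by
  have hmeas := measurable_comp_perm π
  have hprob := hν.1
  refine ⟨Measure.isProbabilityMeasure_map hmeas.aemeasurable, fun s f => ?_⟩
  classical
  rw [Measure.map_apply hmeas (cylSets_measurableSet ⟨s, f, rfl⟩)]
  have hpre : (fun z : ℕ → ZMod 2 => z ∘ π) ⁻¹' {z | ∀ i ∈ s, z i = f i} =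
      {z | ∀ j ∈ s.image π, z j = f (π.symm j)} := by
    ext z
    simp only [Set.mem_preimage, Set.mem_setOf_eq, Finset.mem_image, Function.comp_apply]
    constructor
    · rintro h j ⟨i, hi, rfl⟩
      rw [Equiv.symm_apply_apply]
      exact h i hi
    · intro h i hi
      have := h (π i) ⟨i, hi, rfl⟩
      rwa [Equiv.symm_apply_apply] at this
  rw [hpre, hν.2 (s.image π) (fun j => f (π.symm j)),
    Finset.prod_image (fun x _ y _ h => π.injective h)]
  refine Finset.prod_congr rfl fun i _ => ?_
  rw [Equiv.symm_apply_apply]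

lemma map_perm_eq {p : ℝ} {ν : Measure (ℕ → ZMod 2)}
    (hν : IsBernoulliProduct p ν) (π : Equiv.Perm ℕ) :
    Measure.map (fun z => z ∘ π) ν = ν :=
  bernoulliProduct_unique (map_perm_isBernoulliProduct hν π) hν

/-- Translation invariance of the uniform measure on `ZMod 2`. -/
lemma uniform_map_add_right (c : ZMod 2) :
    Measure.map (fun η : ZMod 2 => η + c) (PMF.uniformOfFintype (ZMod 2)).toMeasure =
      (PMF.uniformOfFintype (ZMod 2)).toMeasure := by
  refine Measure.ext_iff_singleton.mpr fun a => ?_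
  rw [Measure.map_apply (measurable_of_countable _) (measurableSet_singleton a)]
  have hpre : (fun η : ZMod 2 => η + c) ⁻¹' {a} = {a + c} := by
    have h : ∀ η a c : ZMod 2, η + c = a ↔ η = a + c := by decide
    ext η
    simp only [Set.mem_preimage, Set.mem_singleton_iff]
    exact h η a c
  rw [hpre, PMF.toMeasure_apply_singleton _ _ (measurableSet_singleton _),
    PMF.toMeasure_apply_singleton _ _ (measurableSet_singleton _),
    PMF.uniformOfFintype_apply, PMF.uniformOfFintype_apply]

lemma measurable_shear (i : ℕ) :
    Measurable fun q : (ℕ → ZMod 2) × ZMod 2 => (q.1, q.2 + q.1 i) :=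
  measurable_fst.prodMk
    ((measurable_of_countable (fun v : ZMod 2 × ZMod 2 => v.1 + v.2)).comp
      (measurable_snd.prodMk ((measurable_pi_apply i).comp measurable_fst)))

/-- The "shear" `(z, η) ↦ (z, η + z i)` preserves `ν ⊗ uniform`. -/
lemma map_shear_eq (ν : Measure (ℕ → ZMod 2)) [IsProbabilityMeasure ν] (i : ℕ) :
    Measure.map (fun q : (ℕ → ZMod 2) × ZMod 2 => (q.1, q.2 + q.1 i))
      (ν.prod (PMF.uniformOfFintype (ZMod 2)).toMeasure) =
      ν.prod (PMF.uniformOfFintype (ZMod 2)).toMeasure := by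
  set u := (PMF.uniformOfFintype (ZMod 2)).toMeasure with hu
  symm
  refine Measure.prod_eq fun s t hs ht => ?_
  rw [Measure.map_apply (measurable_shear i) (hs.prod ht)]
  have hpre : (fun q : (ℕ → ZMod 2) × ZMod 2 => (q.1, q.2 + q.1 i)) ⁻¹' (s ×ˢ t) =
      {q : (ℕ → ZMod 2) × ZMod 2 | q.1 ∈ s ∧ q.2 + q.1 i ∈ t} := by
    ext q; simp [Set.mem_prod]
  have hmE : MeasurableSet {q : (ℕ → ZMod 2) × ZMod 2 | q.1 ∈ s ∧ q.2 + q.1 i ∈ t} := by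
    refine (hs.preimage measurable_fst).inter ?_
    exact ((measurable_of_countable (fun v : ZMod 2 × ZMod 2 => v.1 + v.2)).comp
      (measurable_snd.prodMk ((measurable_pi_apply i).comp measurable_fst))) ht
  rw [hpre, Measure.prod_apply hmE]
  have hslice : ∀ z : ℕ → ZMod 2,
      u (Prod.mk z ⁻¹' {q : (ℕ → ZMod 2) × ZMod 2 | q.1 ∈ s ∧ q.2 + q.1 i ∈ t}) =
        s.indicator (fun _ => u t) z := by
    intro z
    by_cases hz : z ∈ s
    · have h1 : Prod.mk z ⁻¹' {q : (ℕ → ZMod 2) × ZMod 2 | q.1 ∈ s ∧ q.2 + q.1 i ∈ t}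
          = (fun η : ZMod 2 => η + z i) ⁻¹' t := by
        ext η; simp [hz]
      rw [h1, Set.indicator_of_mem hz]
      rw [← Measure.map_apply (measurable_of_countable _) ht, uniform_map_add_right (z i)]
    · have h1 : Prod.mk z ⁻¹' {q : (ℕ → ZMod 2) × ZMod 2 | q.1 ∈ s ∧ q.2 + q.1 i ∈ t}
          = (∅ : Set (ZMod 2)) := by
        ext η; simp [hz]
      rw [h1, Set.indicator_of_notMem hz, measure_empty]
  calc ∫⁻ z, u (Prod.mk z ⁻¹' {q : (ℕ → ZMod 2) × ZMod 2 | q.1 ∈ s ∧ q.2 + q.1 i ∈ t}) ∂ν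
      = ∫⁻ z, s.indicator (fun _ => u t) z ∂ν := lintegral_congr hslice
    _ = ν s * u t := by rw [lintegral_indicator hs, setLIntegral_const, mul_comm]

lemma measurable_precomp (γ : (ℕ →₀ ZMod 2) → (ℕ →₀ ZMod 2)) :
    Measurable fun ω : (ℕ →₀ ZMod 2) → Bool => ω ∘ γ :=
  measurable_pi_lambda _ fun x => measurable_pi_apply (γ x)

lemma measurable_cubeF :
    Measurable fun q : (ℕ → ZMod 2) × ZMod 2 =>
      fun x : ℕ →₀ ZMod 2 => decide (cubePair x q.1 + q.2 = 0) := by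
  refine measurable_pi_lambda _ fun x => ?_
  have h1 : Measurable fun q : (ℕ → ZMod 2) × ZMod 2 => (cubePair x q.1, q.2) := by
    refine Measurable.prodMk ?_ measurable_snd
    have : Measurable fun z : ℕ → ZMod 2 => cubePair x z := by
      unfold cubePair
      exact Finset.measurable_sum _ fun i _ =>
        (measurable_of_countable (fun v : ZMod 2 => x i * v)).comp (measurable_pi_apply i)
    exact this.comp measurable_fst
  exact (measurable_of_countable (fun v : ZMod 2 × ZMod 2 => decide (v.1 + v.2 = 0))).comp h1

end Aux

/-- The law `μ_p` of the random configuration `x ↦ 1[⟨x,z⟩ + η = 0]`, with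
`z ∼ Bernoulli(p)^⊗ℕ` and `η` uniform on `𝔽₂` independent of `z`, is invariant under
the coordinate-permuting action `(τ^γ ω)(x) = ω(γ x)` of the cube group. -/
theorem bernoulli_hyperplane_law_cube_exchangeable (p : ℝ) (ν : Measure (ℕ → ZMod 2))
    (hν : IsBernoulliProduct p ν) :
    ∀ γ ∈ cubeGroup,
      Measure.map (fun ω : (ℕ →₀ ZMod 2) → Bool => ω ∘ γ)
          (Measure.map
            (fun p : (ℕ → ZMod 2) × ZMod 2 =>
              fun x : ℕ →₀ ZMod 2 => decide (cubePair x p.1 + p.2 = 0))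
            (ν.prod (PMF.uniformOfFintype (ZMod 2)).toMeasure)) =
        Measure.map
          (fun p : (ℕ → ZMod 2) × ZMod 2 =>
            fun x : ℕ →₀ ZMod 2 => decide (cubePair x p.1 + p.2 = 0))
          (ν.prod (PMF.uniformOfFintype (ZMod 2)).toMeasure) := by
  classical
  haveI : IsProbabilityMeasure ν := hν.1
  set u := (PMF.uniformOfFintype (ZMod 2)).toMeasure with hu
  set F : (ℕ → ZMod 2) × ZMod 2 → (ℕ →₀ ZMod 2) → Bool :=
    fun q => fun x : ℕ →₀ ZMod 2 => decide (cubePair x q.1 + q.2 = 0) with hF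
  have hFmeas : Measurable F := measurable_cubeF
  intro γ hγ
  replace hγ : γ ∈ Subgroup.closure
      ({e | ∃ π : Equiv.Perm ℕ, {i | π i ≠ i}.Finite ∧ e = Finsupp.equivCongrLeft π} ∪
       {e | ∃ i : ℕ, e = Equiv.addLeft (Finsupp.single i 1)}) := hγ
  induction hγ using Subgroup.closure_induction with
  | mem g hg =>
    rcases hg with ⟨π, -, rfl⟩ | ⟨i, rfl⟩
    · -- coordinate permutation
      have hcomp : (fun ω : (ℕ →₀ ZMod 2) → Bool => ω ∘ ⇑(Finsupp.equivCongrLeft π)) ∘ F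
          = F ∘ (fun q : (ℕ → ZMod 2) × ZMod 2 => (q.1 ∘ π, q.2)) := by
        funext q
        funext x
        simp only [Function.comp_apply, hF]
        rw [show (Finsupp.equivCongrLeft π) x = Finsupp.equivMapDomain π x from rfl,
          cubePair_equivMapDomain]
      have hgmeas : Measurable fun q : (ℕ → ZMod 2) × ZMod 2 => (q.1 ∘ π, q.2) :=
        ((measurable_comp_perm π).comp measurable_fst).prodMk measurable_snd
      rw [Measure.map_map (measurable_precomp _) hFmeas, hcomp,
        ← Measure.map_map hFmeas hgmeas]
      have hmp : Measure.map (fun q : (ℕ → ZMod 2) × ZMod 2 => (q.1 ∘ π, q.2)) (ν.prod u)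
          = ν.prod u := by
        have h1 := Measure.map_prod_map ν u (measurable_comp_perm π) measurable_id
        rw [Measure.map_id] at h1
        rw [show (fun q : (ℕ → ZMod 2) × ZMod 2 => (q.1 ∘ π, q.2))
            = Prod.map (fun z : ℕ → ZMod 2 => z ∘ π) id from rfl, ← h1, map_perm_eq hν π]
      rw [hmp]
    · -- bit flip
      have hcomp : (fun ω : (ℕ →₀ ZMod 2) → Bool => ω ∘ ⇑(Equiv.addLeft (Finsupp.single i 1))) ∘ F
          = F ∘ (fun q : (ℕ → ZMod 2) × ZMod 2 => (q.1, q.2 + q.1 i)) := by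
        funext q
        funext x
        simp only [Function.comp_apply, hF, Equiv.coe_addLeft]
        rw [cubePair_add, cubePair_single, decide_eq_decide]
        constructor <;> intro h <;> linear_combination h
      rw [Measure.map_map (measurable_precomp _) hFmeas, hcomp,
        ← Measure.map_map hFmeas (measurable_shear i), map_shear_eq ν i]
  | one =>
    have : (fun ω : (ℕ →₀ ZMod 2) → Bool => ω ∘ ⇑(1 : Equiv.Perm (ℕ →₀ ZMod 2))) = id := by
      funext ω; rfl
    rw [this, Measure.map_id]
  | mul g₁ g₂ _ _ h1 h2 =>
    have hc : (fun ω : (ℕ →₀ ZMod 2) → Bool => ω ∘ ⇑(g₁ * g₂))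
        = (fun ω : (ℕ →₀ ZMod 2) → Bool => ω ∘ ⇑g₂) ∘
          (fun ω : (ℕ →₀ ZMod 2) → Bool => ω ∘ ⇑g₁) := by
      funext ω; rfl
    rw [hc, ← Measure.map_map (measurable_precomp _) (measurable_precomp _), h1, h2]
  | inv g _ h =>
    calc Measure.map (fun ω : (ℕ →₀ ZMod 2) → Bool => ω ∘ ⇑g⁻¹) (Measure.map F (ν.prod u))
        = Measure.map (fun ω : (ℕ →₀ ZMod 2) → Bool => ω ∘ ⇑g⁻¹)
            (Measure.map (fun ω : (ℕ →₀ ZMod 2) → Bool => ω ∘ ⇑g)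
              (Measure.map F (ν.prod u))) := by rw [h]
      _ = Measure.map ((fun ω : (ℕ →₀ ZMod 2) → Bool => ω ∘ ⇑g⁻¹) ∘
            (fun ω : (ℕ →₀ ZMod 2) → Bool => ω ∘ ⇑g)) (Measure.map F (ν.prod u)) :=
          Measure.map_map (measurable_precomp _) (measurable_precomp _)
      _ = Measure.map F (ν.prod u) := by
          have : ((fun ω : (ℕ →₀ ZMod 2) → Bool => ω ∘ ⇑g⁻¹) ∘
              (fun ω : (ℕ →₀ ZMod 2) → Bool => ω ∘ ⇑g)) = id := by
            funext ω
            funext x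
            simp [Equiv.Perm.inv_def]
          rw [this, Measure.map_id]
end

section
/- With μ_p as above (the law of x ↦ 1[⟨x,z⟩ + η = 0] with z ∼ Bernoulli(p)^⊗ℕ, η uniform on 𝔽₂ independent), for every N ≥ 1 and ε > 0 there exists p > 0 such that μ_p{ω : ω|_{𝔽₂^N} ≡ 0} ≥ 1/2 − ε and μ_p{ω : ω|_{𝔽₂^N} ≡ 1} ≥ 1/2 − ε. In particular μ_p → (1/2)δ_𝟘 + (1/2)δ_𝟙 weakly as p → 0⁺, where δ_𝟘, δ_𝟙 are the point masses at the constant-0 and constant-1 configurations in {0,1}^(𝔽₂^(⊕ℕ)). -/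
open MeasureTheory Filter

/-- The law of `x ↦ 1[⟨x,z⟩ + η = 0]` with `z ∼ ν` and `η` uniform on `𝔽₂`
independent of `z`. -/
noncomputable def hyperplaneLaw (ν : Measure (ℕ → ZMod 2)) :
    Measure ((ℕ →₀ ZMod 2) → Bool) :=
  Measure.map
    (fun p : (ℕ → ZMod 2) × ZMod 2 =>
      fun x : ℕ →₀ ZMod 2 => decide (cubePair x p.1 + p.2 = 0))
    (ν.prod (PMF.uniformOfFintype (ZMod 2)).toMeasure)

lemma measurable_hT : Measurable (fun p : (ℕ → ZMod 2) × ZMod 2 =>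
    fun x : ℕ →₀ ZMod 2 => decide (cubePair x p.1 + p.2 = 0)) := by
  apply measurable_pi_lambda
  intro x
  have h1 : Measurable (fun p : (ℕ → ZMod 2) × ZMod 2 => (cubePair x p.1, p.2)) := by
    refine Measurable.prod ?_ measurable_snd
    unfold cubePair
    refine Finset.measurable_sum _ (fun i _ => ?_)
    exact (measurable_of_countable (fun c => x i * c)).comp
      ((measurable_pi_apply i).comp measurable_fst)
  exact (measurable_of_countable (fun q : ZMod 2 × ZMod 2 => decide (q.1 + q.2 = 0))).comp h1

lemma measurableSet_Ab (N : ℕ) (b : Bool) :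
    MeasurableSet {ω : (ℕ →₀ ZMod 2) → Bool |
      ∀ x : ℕ →₀ ZMod 2, (∀ i ≥ N, x i = 0) → ω x = b} := by
  have : {ω : (ℕ →₀ ZMod 2) → Bool | ∀ x : ℕ →₀ ZMod 2, (∀ i ≥ N, x i = 0) → ω x = b}
      = ⋂ x ∈ {x : ℕ →₀ ZMod 2 | ∀ i ≥ N, x i = 0}, {ω : (ℕ →₀ ZMod 2) → Bool | ω x = b} := by
    ext ω; simp [Set.mem_iInter]
  rw [this]
  refine MeasurableSet.biInter (Set.to_countable _) (fun x _ => ?_)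
  have : {ω : (ℕ →₀ ZMod 2) → Bool | ω x = b} = (fun ω : (ℕ →₀ ZMod 2) → Bool => ω x) ⁻¹' {b} := rfl
  rw [this]
  exact (measurable_pi_apply x) (measurableSet_singleton b)

lemma mass_lemma {p : ℝ} (hp : p ∈ Set.Ioo (0:ℝ) 1) {μ : Measure (ℕ → ZMod 2)}
    (hμ : IsBernoulliProduct p μ) (N : ℕ) (b : Bool) :
    ENNReal.ofReal ((1-p)^N) * 2⁻¹ ≤
      hyperplaneLaw μ {ω | ∀ x : ℕ →₀ ZMod 2, (∀ i ≥ N, x i = 0) → ω x = b} := by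
  haveI : IsProbabilityMeasure μ := hμ.1
  set T := fun q : (ℕ → ZMod 2) × ZMod 2 =>
      fun x : ℕ →₀ ZMod 2 => decide (cubePair x q.1 + q.2 = 0) with hT
  have hmap : hyperplaneLaw μ {ω | ∀ x : ℕ →₀ ZMod 2, (∀ i ≥ N, x i = 0) → ω x = b}
      = (μ.prod (PMF.uniformOfFintype (ZMod 2)).toMeasure)
        (T ⁻¹' {ω | ∀ x : ℕ →₀ ZMod 2, (∀ i ≥ N, x i = 0) → ω x = b}) := by
    exact Measure.map_apply measurable_hT (measurableSet_Ab N b)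
  rw [hmap]
  set η : ZMod 2 := if b then 0 else 1 with hη
  have hsub : ({z : ℕ → ZMod 2 | ∀ i ∈ Finset.range N, z i = 0} ×ˢ ({η} : Set (ZMod 2)))
      ⊆ T ⁻¹' {ω | ∀ x : ℕ →₀ ZMod 2, (∀ i ≥ N, x i = 0) → ω x = b} := by
    rintro ⟨z, e⟩ ⟨hz, he⟩
    simp only [Set.mem_setOf_eq] at hz
    simp only [Set.mem_singleton_iff] at he
    intro x hx
    have hcp : cubePair x z = 0 := by
      unfold cubePair
      refine Finset.sum_eq_zero (fun i hi => ?_)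
      by_cases hiN : i < N
      · rw [hz i (Finset.mem_range.mpr hiN), mul_zero]
      · rw [hx i (le_of_not_gt hiN), zero_mul]
    show decide (cubePair x z + e = 0) = b
    rw [hcp, zero_add, he, hη]
    cases b <;> simp
  refine le_trans (le_of_eq ?_) (measure_mono hsub)
  rw [Measure.prod_prod]
  congr 1
  · have := hμ.2 (Finset.range N) 0
    simp only [Pi.zero_apply] at this
    rw [this]
    have h01 : ((0 : ZMod 2) = 1) = False := by simp
    simp only [h01, if_false, Finset.prod_const, Finset.card_range]
    rw [ENNReal.ofReal_pow (by linarith [hp.2] : (0:ℝ) ≤ 1 - p)]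
  · rw [PMF.toMeasure_apply_singleton _ _ (measurableSet_singleton η)]
    simp [PMF.uniformOfFintype_apply, ZMod.card]

lemma cont_cylinder (f : C((ℕ →₀ ZMod 2) → Bool, ℝ)) (b : Bool) (ε : ℝ) (hε : 0 < ε) :
    ∃ N : ℕ, ∀ ω : (ℕ →₀ ZMod 2) → Bool,
      (∀ x : ℕ →₀ ZMod 2, (∀ i ≥ N, x i = 0) → ω x = b) →
      |f ω - f (fun _ => b)| ≤ ε := by
  have hopen : IsOpen (f ⁻¹' Metric.ball (f (fun _ => b)) ε) :=
    f.continuous.isOpen_preimage _ Metric.isOpen_ball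
  have hmem : (fun _ : ℕ →₀ ZMod 2 => b) ∈ f ⁻¹' Metric.ball (f (fun _ => b)) ε := by
    simp [Metric.mem_ball, hε]
  obtain ⟨I, u, hu, hsub⟩ := (isOpen_pi_iff.mp hopen) _ hmem
  set N : ℕ := (I.sup fun x => x.support.sup id) + 1 with hN
  refine ⟨N, fun ω hω => ?_⟩
  have hωU : ω ∈ f ⁻¹' Metric.ball (f (fun _ => b)) ε := by
    apply hsub
    intro x hx
    have hxI : x ∈ I := hx
    have hxb : ω x = b := by
      apply hω
      intro i hi
      by_contra hne
      have hisup : i ∈ x.support := Finsupp.mem_support_iff.mpr hne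
      have h1 : id i ≤ x.support.sup id := Finset.le_sup hisup
      have h2 : x.support.sup id ≤ I.sup fun x => x.support.sup id :=
        Finset.le_sup (f := fun x => x.support.sup id) hxI
      have : i ≤ I.sup fun x => x.support.sup id := le_trans h1 h2
      omega
    rw [hxb]
    exact (hu x hxI).2
  have := Metric.mem_ball.mp hωU
  rw [Real.dist_eq] at this
  exact le_of_lt this

lemma mass_upper {μ : Measure (ℕ → ZMod 2)} [IsProbabilityMeasure μ] (N : ℕ) (b : Bool) :
    hyperplaneLaw μ {ω | ∀ x : ℕ →₀ ZMod 2, (∀ i ≥ N, x i = 0) → ω x = b} ≤ 2⁻¹ := by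
  set T := fun q : (ℕ → ZMod 2) × ZMod 2 =>
      fun x : ℕ →₀ ZMod 2 => decide (cubePair x q.1 + q.2 = 0) with hT
  rw [hyperplaneLaw, Measure.map_apply measurable_hT (measurableSet_Ab N b)]
  set η : ZMod 2 := if b then 0 else 1 with hη
  have hsub : T ⁻¹' {ω | ∀ x : ℕ →₀ ZMod 2, (∀ i ≥ N, x i = 0) → ω x = b}
      ⊆ (Set.univ : Set (ℕ → ZMod 2)) ×ˢ ({η} : Set (ZMod 2)) := by
    rintro ⟨z, e⟩ hq
    have h0 : T (z, e) 0 = b := hq 0 (fun i _ => rfl)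
    have hcp : cubePair 0 z = 0 := by simp [cubePair]
    simp only [hT, hcp, zero_add] at h0
    refine ⟨Set.mem_univ _, ?_⟩
    simp only [Set.mem_singleton_iff, hη]
    cases b with
    | false =>
      simp only [decide_eq_false_iff_not] at h0
      fin_cases e <;> simp_all
      · exact absurd rfl h0
      · rfl
    | true =>
      simp only [decide_eq_true_eq] at h0
      simp [h0]
  refine le_trans (measure_mono hsub) ?_
  rw [Measure.prod_prod, measure_univ, one_mul,
    PMF.toMeasure_apply_singleton _ _ (measurableSet_singleton η)]
  simp [PMF.uniformOfFintype_apply, ZMod.card]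

set_option maxHeartbeats 1000000 in
lemma key_estimate (f : C((ℕ →₀ ZMod 2) → Bool, ℝ)) {ε : ℝ} (hε : 0 < ε) :
    ∃ δ > 0, ∀ p ∈ Set.Ioo (0:ℝ) 1, p < δ → ∀ μ : Measure (ℕ → ZMod 2),
      IsBernoulliProduct p μ →
      |(∫ ω, f ω ∂(hyperplaneLaw μ)) - (f (fun _ => false) + f (fun _ => true)) / 2| < ε := by
  classical
  set C : ℝ := ‖BoundedContinuousFunction.mkOfCompact f‖ with hCdef
  have hC : ∀ ω, |f ω| ≤ C := fun ω => by
    simpa [Real.norm_eq_abs, hCdef] using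
      (BoundedContinuousFunction.mkOfCompact f).norm_coe_le_norm ω
  have hC0 : (0:ℝ) ≤ C := norm_nonneg _
  obtain ⟨N₁, hN₁⟩ := cont_cylinder f false (ε/4) (by linarith)
  obtain ⟨N₂, hN₂⟩ := cont_cylinder f true (ε/4) (by linarith)
  set N : ℕ := max N₁ N₂ with hNdef
  refine ⟨ε / (8 * (C+1) * (N+1)), by positivity, ?_⟩
  intro p hp hpδ μ hμ
  haveI : IsProbabilityMeasure μ := hμ.1
  set T := fun q : (ℕ → ZMod 2) × ZMod 2 =>
      fun x : ℕ →₀ ZMod 2 => decide (cubePair x q.1 + q.2 = 0) with hTdef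
  set P := μ.prod (PMF.uniformOfFintype (ZMod 2)).toMeasure with hPdef
  haveI : IsProbabilityMeasure P := by
    rw [hPdef]; infer_instance
  have hsm : StronglyMeasurable (f : ((ℕ →₀ ZMod 2) → Bool) → ℝ) :=
    f.continuous.stronglyMeasurable
  set g : (ℕ → ZMod 2) × ZMod 2 → ℝ := fun q => f (T q) with hgdef
  have hgsm : StronglyMeasurable g := hsm.comp_measurable measurable_hT
  have hgi : Integrable g P :=
    ⟨hgsm.aestronglyMeasurable,
      HasFiniteIntegral.of_bounded (C := C) (ae_of_all _ fun q => by
        simpa [Real.norm_eq_abs] using hC (T q))⟩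
  have hint : ∫ ω, f ω ∂(hyperplaneLaw μ) = ∫ q, g q ∂P :=
    integral_map measurable_hT.aemeasurable hsm.aestronglyMeasurable
  set AF : Set ((ℕ →₀ ZMod 2) → Bool) :=
    {ω | ∀ x : ℕ →₀ ZMod 2, (∀ i ≥ N, x i = 0) → ω x = false} with hAFdef
  set AT : Set ((ℕ →₀ ZMod 2) → Bool) :=
    {ω | ∀ x : ℕ →₀ ZMod 2, (∀ i ≥ N, x i = 0) → ω x = true} with hATdef
  set F : Set ((ℕ → ZMod 2) × ZMod 2) := T ⁻¹' AF with hFdef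
  set Tt : Set ((ℕ → ZMod 2) × ZMod 2) := T ⁻¹' AT with hTtdef
  have hFm : MeasurableSet F := measurable_hT (measurableSet_Ab N false)
  have hTtm : MeasurableSet Tt := measurable_hT (measurableSet_Ab N true)
  have hdisj : Disjoint F Tt := by
    refine Set.disjoint_left.mpr fun q hqF hqT => ?_
    have h1 : T q 0 = false := hqF 0 (fun i _ => rfl)
    have h2 : T q 0 = true := hqT 0 (fun i _ => rfl)
    rw [h1] at h2; exact Bool.false_ne_true h2
  have hmapF : hyperplaneLaw μ AF = P F :=
    Measure.map_apply measurable_hT (measurableSet_Ab N false)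
  have hmapT : hyperplaneLaw μ AT = P Tt :=
    Measure.map_apply measurable_hT (measurableSet_Ab N true)
  set a : ℝ := (P F).toReal with hadef
  set b : ℝ := (P Tt).toReal with hbdef
  set r : ℝ := (P ((F ∪ Tt)ᶜ)).toReal with hrdef
  have hfin : ∀ s : Set ((ℕ → ZMod 2) × ZMod 2), P s ≠ ⊤ :=
    fun s => measure_ne_top P s
  -- bounds on a and b
  have hBern : (1 : ℝ) - (N:ℝ) * p ≤ (1-p)^N := by
    have := one_add_mul_le_pow (a := -p) (by linarith [hp.1, hp.2]) N
    simpa [sub_eq_add_neg, mul_comm] using this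
  have halb : ((1:ℝ)-p)^N / 2 ≤ a := by
    have h := mass_lemma hp hμ N false
    rw [hmapF] at h
    have := ENNReal.toReal_mono (hfin F) h
    rw [ENNReal.toReal_mul, ENNReal.toReal_ofReal (pow_nonneg (by linarith [hp.2]) N)] at this
    simpa [div_eq_mul_inv] using this
  have hblb : ((1:ℝ)-p)^N / 2 ≤ b := by
    have h := mass_lemma hp hμ N true
    rw [hmapT] at h
    have := ENNReal.toReal_mono (hfin Tt) h
    rw [ENNReal.toReal_mul, ENNReal.toReal_ofReal (pow_nonneg (by linarith [hp.2]) N)] at this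
    simpa [div_eq_mul_inv] using this
  have haub : a ≤ 1/2 := by
    have h := mass_upper (μ := μ) N false
    rw [hmapF] at h
    have := ENNReal.toReal_mono (by simp) h
    simpa using this
  have hbub : b ≤ 1/2 := by
    have h := mass_upper (μ := μ) N true
    rw [hmapT] at h
    have := ENNReal.toReal_mono (by simp) h
    simpa using this
  have hr0 : 0 ≤ r := ENNReal.toReal_nonneg
  have hsum : a + b + r = 1 := by
    have h1 : P (F ∪ Tt) + P ((F ∪ Tt)ᶜ) = 1 := by
      rw [measure_add_measure_compl (hFm.union hTtm)]; exact measure_univ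
    have h2 : P (F ∪ Tt) = P F + P Tt := measure_union hdisj hTtm
    rw [h2] at h1
    have h3 := congrArg ENNReal.toReal h1
    rw [ENNReal.toReal_add (by exact ENNReal.add_ne_top.mpr ⟨hfin F, hfin Tt⟩) (hfin _),
      ENNReal.toReal_add (hfin F) (hfin Tt), ENNReal.toReal_one] at h3
    exact h3
  -- split the integral
  have hsplit : ∫ q, g q ∂P
      = (∫ q in F, g q ∂P + ∫ q in Tt, g q ∂P) + ∫ q in (F ∪ Tt)ᶜ, g q ∂P := by
    rw [← integral_add_compl (hFm.union hTtm) hgi,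
      setIntegral_union hdisj hTtm hgi.integrableOn hgi.integrableOn]
  -- pointwise bounds on F and Tt
  have hptF : ∀ q ∈ F, ‖g q - f (fun _ => false)‖ ≤ ε/4 := by
    intro q hq
    rw [Real.norm_eq_abs]
    refine hN₁ (T q) fun x hx => hq x fun i hi => hx i (le_trans (le_max_left _ _) hi)
  have hptT : ∀ q ∈ Tt, ‖g q - f (fun _ => true)‖ ≤ ε/4 := by
    intro q hq
    rw [Real.norm_eq_abs]
    refine hN₂ (T q) fun x hx => hq x fun i hi => hx i (le_trans (le_max_right _ _) hi)
  -- integral bounds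
  have hconst : ∀ (c : ℝ) (s : Set ((ℕ → ZMod 2) × ZMod 2)),
      IntegrableOn (fun _ => c) s P :=
    fun c s => integrableOn_const (measure_ne_top P s)
  have hbF : |(∫ q in F, g q ∂P) - f (fun _ => false) * a| ≤ (ε/4) * a := by
    have heq : ∫ q in F, (g q - f (fun _ => false)) ∂P
        = (∫ q in F, g q ∂P) - f (fun _ => false) * a := by
      rw [integral_sub hgi.integrableOn (hconst _ F), setIntegral_const, smul_eq_mul,
        mul_comm]
      rfl
    rw [← heq, ← Real.norm_eq_abs]
    exact norm_setIntegral_le_of_norm_le_const (measure_lt_top P F) hptF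
  have hbT : |(∫ q in Tt, g q ∂P) - f (fun _ => true) * b| ≤ (ε/4) * b := by
    have heq : ∫ q in Tt, (g q - f (fun _ => true)) ∂P
        = (∫ q in Tt, g q ∂P) - f (fun _ => true) * b := by
      rw [integral_sub hgi.integrableOn (hconst _ Tt), setIntegral_const, smul_eq_mul,
        mul_comm]
      rfl
    rw [← heq, ← Real.norm_eq_abs]
    exact norm_setIntegral_le_of_norm_le_const (measure_lt_top P Tt) hptT
  have hbR : |∫ q in (F ∪ Tt)ᶜ, g q ∂P| ≤ C * r := by
    rw [← Real.norm_eq_abs]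
    exact norm_setIntegral_le_of_norm_le_const (measure_lt_top P _)
      (fun q _ => by simpa [Real.norm_eq_abs] using hC (T q))
  -- constant-term bounds
  have hcF : |f (fun _ => false) * a - f (fun _ => false) * (1/2)| ≤ C * (1/2 - a) := by
    have h1 : f (fun _ => false) * a - f (fun _ => false) * (1/2)
        = f (fun _ => false) * (a - 1/2) := by ring
    rw [h1, abs_mul, abs_of_nonpos (by linarith : a - 1/2 ≤ 0)]
    have := hC (fun _ => false)
    nlinarith
  have hcT : |f (fun _ => true) * b - f (fun _ => true) * (1/2)| ≤ C * (1/2 - b) := by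
    have h1 : f (fun _ => true) * b - f (fun _ => true) * (1/2)
        = f (fun _ => true) * (b - 1/2) := by ring
    rw [h1, abs_mul, abs_of_nonpos (by linarith : b - 1/2 ≤ 0)]
    have := hC (fun _ => true)
    nlinarith
  -- assemble
  rw [hint]
  have hdecomp : (∫ q, g q ∂P) - (f (fun _ => false) + f (fun _ => true)) / 2
      = ((∫ q in F, g q ∂P) - f (fun _ => false) * a)
        + (f (fun _ => false) * a - f (fun _ => false) * (1/2))
        + ((∫ q in Tt, g q ∂P) - f (fun _ => true) * b)
        + (f (fun _ => true) * b - f (fun _ => true) * (1/2))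
        + ∫ q in (F ∪ Tt)ᶜ, g q ∂P := by
    rw [hsplit]; ring
  rw [hdecomp]
  have habs : |((∫ q in F, g q ∂P) - f (fun _ => false) * a)
        + (f (fun _ => false) * a - f (fun _ => false) * (1/2))
        + ((∫ q in Tt, g q ∂P) - f (fun _ => true) * b)
        + (f (fun _ => true) * b - f (fun _ => true) * (1/2))
        + ∫ q in (F ∪ Tt)ᶜ, g q ∂P|
      ≤ (ε/4) * a + C * (1/2 - a) + (ε/4) * b + C * (1/2 - b) + C * r := by
    calc _ ≤ |((∫ q in F, g q ∂P) - f (fun _ => false) * a)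
        + (f (fun _ => false) * a - f (fun _ => false) * (1/2))
        + ((∫ q in Tt, g q ∂P) - f (fun _ => true) * b)
        + (f (fun _ => true) * b - f (fun _ => true) * (1/2))|
        + |∫ q in (F ∪ Tt)ᶜ, g q ∂P| := abs_add_le _ _
    _ ≤ (|((∫ q in F, g q ∂P) - f (fun _ => false) * a)
        + (f (fun _ => false) * a - f (fun _ => false) * (1/2))
        + ((∫ q in Tt, g q ∂P) - f (fun _ => true) * b)|
        + |f (fun _ => true) * b - f (fun _ => true) * (1/2)|)
        + |∫ q in (F ∪ Tt)ᶜ, g q ∂P| := by gcongr; exact abs_add_le _ _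
    _ ≤ ((|((∫ q in F, g q ∂P) - f (fun _ => false) * a)
        + (f (fun _ => false) * a - f (fun _ => false) * (1/2))|
        + |(∫ q in Tt, g q ∂P) - f (fun _ => true) * b|)
        + |f (fun _ => true) * b - f (fun _ => true) * (1/2)|)
        + |∫ q in (F ∪ Tt)ᶜ, g q ∂P| := by gcongr; exact abs_add_le _ _
    _ ≤ (((|(∫ q in F, g q ∂P) - f (fun _ => false) * a|
        + |f (fun _ => false) * a - f (fun _ => false) * (1/2)|)
        + |(∫ q in Tt, g q ∂P) - f (fun _ => true) * b|)
        + |f (fun _ => true) * b - f (fun _ => true) * (1/2)|)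
        + |∫ q in (F ∪ Tt)ᶜ, g q ∂P| := by gcongr; exact abs_add_le _ _
    _ ≤ (ε/4) * a + C * (1/2 - a) + (ε/4) * b + C * (1/2 - b) + C * r := by
        have := hbF; have := hbT; have := hbR; have := hcF; have := hcT; linarith
  refine lt_of_le_of_lt habs ?_
  -- final arithmetic
  have hNp : ((N:ℝ)) ≤ (N:ℝ) + 1 := by linarith
  have hpbound : 2 * C * ((N:ℝ)+1) * p < ε/4 := by
    have hp0 : 0 < p := hp.1
    have hδ : p < ε / (8 * (C+1) * ((N:ℝ)+1)) := by exact_mod_cast hpδ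
    have hpos : (0:ℝ) < 8 * (C+1) * ((N:ℝ)+1) := by positivity
    have hlt : p * (8 * (C+1) * ((N:ℝ)+1)) < ε := by
      rw [← lt_div_iff₀ hpos]; exact hδ
    have hNp0 : (0:ℝ) ≤ ((N:ℝ)+1)*p := by positivity
    have hkey : 2*C*(((N:ℝ)+1)*p) ≤ 2*(C+1)*(((N:ℝ)+1)*p) :=
      mul_le_mul_of_nonneg_right (by linarith) hNp0
    calc 2*C*((N:ℝ)+1)*p = 2*C*(((N:ℝ)+1)*p) := by ring
      _ ≤ 2*(C+1)*(((N:ℝ)+1)*p) := hkey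
      _ = (p * (8 * (C+1) * ((N:ℝ)+1)))/4 := by ring
      _ < ε/4 := by linarith
  have h12a : 1/2 - a ≤ (N:ℝ) * p / 2 := by linarith [halb, hBern]
  have h12b : 1/2 - b ≤ (N:ℝ) * p / 2 := by linarith [hblb, hBern]
  have hrub : r ≤ (N:ℝ) * p := by linarith [hsum, halb, hblb, hBern]
  have hab1 : a + b ≤ 1 := by linarith
  have ha0 : 0 ≤ a := ENNReal.toReal_nonneg
  have hb0 : 0 ≤ b := ENNReal.toReal_nonneg
  linarith [mul_le_mul_of_nonneg_left h12a hC0, mul_le_mul_of_nonneg_left h12b hC0,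
    mul_le_mul_of_nonneg_left hrub hC0,
    mul_le_mul_of_nonneg_left hab1 (by linarith : (0:ℝ) ≤ ε/4),
    mul_nonneg hC0 (le_of_lt hp.1), hpbound]

/-- For every `N ≥ 1` and `ε > 0` there is `p > 0` for which the hyperplane law `μ_p`
gives mass at least `1/2 - ε` both to `{ω : ω|_{𝔽₂^N} ≡ 0}` and to
`{ω : ω|_{𝔽₂^N} ≡ 1}`; consequently `μ_p → ½δ_𝟘 + ½δ_𝟙` weakly as `p → 0⁺`
(tested against all continuous functions for the product topology). -/
theorem hyperplaneLaw_approximates_half_dirac (ν : ℝ → Measure (ℕ → ZMod 2))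
    (hν : ∀ p ∈ Set.Ioo (0 : ℝ) 1, IsBernoulliProduct p (ν p)) :
    (∀ N : ℕ, 1 ≤ N → ∀ ε : ℝ, 0 < ε → ∃ p ∈ Set.Ioo (0 : ℝ) 1,
      ENNReal.ofReal (1 / 2 - ε) ≤
        hyperplaneLaw (ν p) {ω | ∀ x : ℕ →₀ ZMod 2, (∀ i ≥ N, x i = 0) → ω x = false} ∧
      ENNReal.ofReal (1 / 2 - ε) ≤
        hyperplaneLaw (ν p) {ω | ∀ x : ℕ →₀ ZMod 2, (∀ i ≥ N, x i = 0) → ω x = true}) ∧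
    (∀ f : C((ℕ →₀ ZMod 2) → Bool, ℝ),
      Tendsto (fun p => ∫ ω, f ω ∂(hyperplaneLaw (ν p)))
        (nhdsWithin 0 (Set.Ioo (0 : ℝ) 1))
        (nhds ((f (fun _ => false) + f (fun _ => true)) / 2))) := by
  constructor
  · intro N hN ε hε
    have hN0 : (0:ℝ) < N := by exact_mod_cast hN
    set p : ℝ := min (2*ε/N) (1/2) with hpdef
    have hp0 : 0 < p := lt_min (by positivity) (by norm_num)
    have hp1 : p < 1 := lt_of_le_of_lt (min_le_right _ _) (by norm_num)
    have hp : p ∈ Set.Ioo (0:ℝ) 1 := ⟨hp0, hp1⟩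
    refine ⟨p, hp, ?_, ?_⟩
    all_goals
      refine le_trans ?_ (mass_lemma hp (hν p hp) N _)
      have h2 : (2⁻¹ : ENNReal) = ENNReal.ofReal (1/2) := by
        rw [one_div, ENNReal.ofReal_inv_of_pos two_pos, ENNReal.ofReal_ofNat]
      rw [h2, ← ENNReal.ofReal_mul (pow_nonneg (by linarith [hp1]) N)]
      apply ENNReal.ofReal_le_ofReal
      have hNp : (N:ℝ) * p ≤ 2*ε := by
        have := min_le_left (2*ε/N) (1/2)
        calc (N:ℝ) * p ≤ (N:ℝ) * (2*ε/N) := by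
              apply mul_le_mul_of_nonneg_left _ (le_of_lt hN0)
              simpa [hpdef] using this
          _ = 2*ε := by field_simp
      have hBern : (1:ℝ) - (N:ℝ)*p ≤ (1-p)^N := by
        have := one_add_mul_le_pow (a := -p) (by linarith) N
        simpa [sub_eq_add_neg, mul_comm] using this
      nlinarith
  · intro f
    rw [Metric.tendsto_nhdsWithin_nhds]
    intro ε hε
    obtain ⟨δ, hδ0, hδ⟩ := key_estimate f hε
    refine ⟨δ, hδ0, ?_⟩
    intro p hp hdist
    rw [Real.dist_eq, sub_zero, abs_of_pos hp.1] at hdist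
    rw [Real.dist_eq]
    exact hδ p hp hdist (ν p) (hν p hp)
end

section
/- Let U be a compact abelian group with Haar probability measure μ_U, and let ν ∈ Pr(U). Define μ on U^(𝔽₂^(⊕ℕ)) as the law of (g_v)_v where g_𝟘 ∼ μ_U, (gᵢ°)_{i∈ℕ} are i.i.d. with law ν independent of g_𝟘, and g_v = g_𝟘 + ∑_{i : v_i=1} gᵢ°. Then μ is invariant under the coordinate-permutation action of Sym₀(ℕ) on 𝔽₂^(⊕ℕ) (hypergraph exchangeability of the random-walk law). -/
open MeasureTheory

/-- `P` is the law on `U^ℕ` of an i.i.d. sequence with common distribution `ν`. -/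
def IsIIDProduct {U : Type*} [MeasurableSpace U] (ν : Measure U)
    (P : Measure (ℕ → U)) : Prop :=
  IsProbabilityMeasure P ∧
    ∀ (s : Finset ℕ) (B : ℕ → Set U), (∀ i, MeasurableSet (B i)) →
      P {h | ∀ i ∈ s, h i ∈ B i} = ∏ i ∈ s, ν (B i)

/-- The random-walk configuration map: given `g₀` and increments `(gᵢ°)`, it produces
`(g_v)_v` with `g_v = g₀ + ∑_{i : v_i = 1} gᵢ°`. -/
noncomputable def randomWalkMap (U : Type*) [AddCommGroup U]
    (q : U × (ℕ → U)) : (ℕ →₀ ZMod 2) → U :=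
  fun v => q.1 + ∑ i ∈ v.support, q.2 i

section Aux

variable {U : Type*} [MeasurableSpace U]

/-- The collection of finite "box" cylinder sets in `ℕ → U`. -/
def boxCylinders (U : Type*) [MeasurableSpace U] : Set (Set (ℕ → U)) :=
  {S | ∃ (s : Finset ℕ) (B : ℕ → Set U), (∀ i, MeasurableSet (B i)) ∧
    S = {h : ℕ → U | ∀ i ∈ s, h i ∈ B i}}

lemma isPiSystem_boxCylinders : IsPiSystem (boxCylinders U) := by
  rintro S₁ ⟨s₁, B₁, hB₁, rfl⟩ S₂ ⟨s₂, B₂, hB₂, rfl⟩ -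
  refine ⟨s₁ ∪ s₂, fun i => (if i ∈ s₁ then B₁ i else Set.univ) ∩
      (if i ∈ s₂ then B₂ i else Set.univ), ?_, ?_⟩
  · intro i
    exact MeasurableSet.inter (by split <;> simp [hB₁ i]) (by split <;> simp [hB₂ i])
  · ext h
    simp only [Set.mem_inter_iff, Set.mem_setOf_eq, Finset.mem_union]
    constructor
    · rintro ⟨h1, h2⟩ i hi
      constructor
      · split
        · exact h1 i ‹_›
        · trivial
      · split
        · exact h2 i ‹_›
        · trivial
    · intro H
      constructor
      · intro i hi
        have := (H i (Or.inl hi)).1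
        simpa [hi] using this
      · intro i hi
        have := (H i (Or.inr hi)).2
        simpa [hi] using this

lemma generateFrom_boxCylinders :
    MeasurableSpace.generateFrom (boxCylinders U) = MeasurableSpace.pi := by
  apply le_antisymm
  · refine MeasurableSpace.generateFrom_le ?_
    rintro S ⟨s, B, hB, rfl⟩
    have : {h : ℕ → U | ∀ i ∈ s, h i ∈ B i} = ⋂ i ∈ s, (fun h : ℕ → U => h i) ⁻¹' B i := by
      ext h; simp
    rw [this]
    exact MeasurableSet.biInter s.countable_toSet
      (fun i _ => (measurable_pi_apply i) (hB i))
  · rw [MeasurableSpace.pi_eq_generateFrom_projections]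
    refine MeasurableSpace.generateFrom_le ?_
    rintro S ⟨i, A, hA, rfl⟩
    apply MeasurableSpace.measurableSet_generateFrom
    refine ⟨{i}, fun _ => A, fun _ => hA, ?_⟩
    ext h; simp

/-- An i.i.d. product law is invariant under any permutation of the coordinates. -/
lemma IsIIDProduct.map_perm (ν : Measure U) (P : Measure (ℕ → U))
    (hP : IsIIDProduct ν P) (e : Equiv.Perm ℕ) :
    P.map (fun h : ℕ → U => h ∘ e) = P := by
  obtain ⟨hPprob, hPbox⟩ := hP
  have hmeas : Measurable (fun h : ℕ → U => h ∘ e) :=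
    measurable_pi_iff.2 fun i => measurable_pi_apply (e i)
  haveI := hPprob
  haveI : IsProbabilityMeasure (P.map (fun h : ℕ → U => h ∘ e)) :=
    Measure.isProbabilityMeasure_map hmeas.aemeasurable
  refine ext_of_generate_finite (boxCylinders U) generateFrom_boxCylinders.symm
    isPiSystem_boxCylinders ?_ (by simp)
  rintro S ⟨s, B, hB, rfl⟩
  rw [Measure.map_apply hmeas]
  swap
  · rw [← generateFrom_boxCylinders]
    exact MeasurableSpace.measurableSet_generateFrom ⟨s, B, hB, rfl⟩
  have hpre : (fun h : ℕ → U => h ∘ e) ⁻¹' {h | ∀ i ∈ s, h i ∈ B i}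
      = {h : ℕ → U | ∀ j ∈ s.image e, h j ∈ B (e.symm j)} := by
    ext h
    simp only [Set.mem_preimage, Set.mem_setOf_eq, Finset.mem_image, Function.comp]
    constructor
    · rintro H j ⟨i, hi, rfl⟩; simpa using H i hi
    · intro H i hi
      have := H (e i) ⟨i, hi, rfl⟩
      simpa using this
  rw [hpre, hPbox _ _ (fun j => hB (e.symm j)), hPbox _ _ hB]
  rw [Finset.prod_image (fun a _ b _ hab => e.injective hab)]
  simp

end Aux

/-- The random-walk law `μ` on `U^(𝔽₂^(⊕ℕ))` (with `g_𝟘 ∼ Haar`, i.i.d. increments of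
law `ν` and `g_v = g_𝟘 + ∑_{i : v_i=1} gᵢ°`) is invariant under the
coordinate-permutation action of the finitely supported permutations of `ℕ`. -/
theorem randomWalkLaw_symZero_invariant (U : Type*) [AddCommGroup U]
    [TopologicalSpace U] [IsTopologicalAddGroup U] [CompactSpace U]
    [MeasurableSpace U] [BorelSpace U]
    (μU : Measure U) [IsProbabilityMeasure μU] [μU.IsAddHaarMeasure]
    (ν : Measure U) [IsProbabilityMeasure ν]
    (P : Measure (ℕ → U)) (hP : IsIIDProduct ν P) :
    ∀ π : Equiv.Perm ℕ, {i | π i ≠ i}.Finite →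
      Measure.map
          (fun ω : (ℕ →₀ ZMod 2) → U => fun v => ω (Finsupp.equivCongrLeft π.symm v))
          (Measure.map (randomWalkMap U) (μU.prod P)) =
        Measure.map (randomWalkMap U) (μU.prod P) := by
  intro π _
  haveI : IsProbabilityMeasure P := hP.1
  set Φ : ((ℕ →₀ ZMod 2) → U) → ((ℕ →₀ ZMod 2) → U) :=
    fun ω => fun v => ω (Finsupp.equivCongrLeft π.symm v) with hΦ
  have hΦmeas : Measurable Φ :=
    measurable_pi_iff.2 fun v => measurable_pi_apply _
  set σ : U × (ℕ → U) → U × (ℕ → U) := fun q => (q.1, q.2 ∘ π.symm) with hσ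
  have hσmeas : Measurable σ :=
    measurable_fst.prodMk
      (measurable_pi_iff.2 fun i => (measurable_pi_apply _).comp measurable_snd)
  -- key algebraic identity
  have hkey : Φ ∘ randomWalkMap U = randomWalkMap U ∘ σ := by
    funext q
    funext v
    show q.1 + ∑ i ∈ (Finsupp.equivCongrLeft π.symm v).support, q.2 i
        = q.1 + ∑ i ∈ v.support, (q.2 ∘ π.symm) i
    congr 1
    have hsupp : (Finsupp.equivCongrLeft π.symm v).support
        = v.support.map (π.symm : ℕ ≃ ℕ).toEmbedding := rfl
    rw [hsupp, Finset.sum_map]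
    rfl
  -- the base measure is invariant under σ
  have hσinv : (μU.prod P).map σ = μU.prod P := by
    have hg : Measurable (fun h : ℕ → U => h ∘ π.symm) :=
      measurable_pi_iff.2 fun i => measurable_pi_apply (π.symm i)
    have h1 : (μU.prod P).map σ = (μU.map id).prod (P.map (fun h : ℕ → U => h ∘ π.symm)) :=
      (Measure.map_prod_map μU P measurable_id hg).symm
    rw [h1, Measure.map_id, IsIIDProduct.map_perm ν P hP π.symm]
  by_cases hT : AEMeasurable (randomWalkMap U) (μU.prod P)
  · rw [AEMeasurable.map_map_of_aemeasurable hΦmeas.aemeasurable hT, hkey,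
      ← AEMeasurable.map_map_of_aemeasurable (by rw [hσinv]; exact hT) hσmeas.aemeasurable, hσinv]
  · rw [Measure.map_of_not_aemeasurable hT, Measure.map_zero]
end

section
/- Let U be a compact abelian group with Haar measure μ_U and ν ∈ Pr(U), and let μ be the random-walk law on U^(𝔽₂^(⊕ℕ)) as above (g_v = g_𝟘 + ∑_{i:v_i=1} gᵢ°). If the maps (g₀,g₁) ↦ (g₀, g₀+g₁) and (g₀,g₁) ↦ (g₀+g₁, g₀) from U × U to U × U have the same distribution under μ_U ⊗ ν, then μ is additionally invariant under each bit-flip σᵢ : v ↦ v + eᵢ acting by (σᵢ·ω)(v) = ω(v + eᵢ). -/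
open MeasureTheory

section Helpers

variable {α β γ : Type*} [MeasurableSpace α] [MeasurableSpace β] [MeasurableSpace γ]

lemma aemeasurable_pi_of_forall {ι : Type*} [Countable ι] {π : ι → Type*}
    [∀ v, MeasurableSpace (π v)] {μ : Measure α} {f : α → ∀ v, π v}
    (h : ∀ v, AEMeasurable (fun x => f x v) μ) : AEMeasurable f μ := by
  refine ⟨fun x v => (h v).mk _ x, measurable_pi_lambda _ fun v => (h v).measurable_mk, ?_⟩
  have hall : ∀ᵐ x ∂μ, ∀ v, f x v = (h v).mk _ x := ae_all_iff.2 fun v => (h v).ae_eq_mk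
  filter_upwards [hall] with x hx
  funext v
  exact hx v

lemma aemeasurable_of_comp_fst {μ : Measure α} {ν : Measure β} [SFinite μ] [SFinite ν]
    [IsProbabilityMeasure ν] {f : α → γ}
    (h : AEMeasurable (fun p : α × β => f p.1) (μ.prod ν)) : AEMeasurable f μ := by
  obtain ⟨φ, hφ, hfe⟩ := h
  set N := toMeasurable (μ.prod ν) {p : α × β | f p.1 ≠ φ p} with hNdef
  have hNmeas : MeasurableSet N := measurableSet_toMeasurable _ _
  have hN0 : (μ.prod ν) N = 0 := by
    rw [hNdef, measure_toMeasurable]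
    exact hfe
  have h1 : (μ.prod ν) N = ∫⁻ y, μ ((fun x => (x, y)) ⁻¹' N) ∂ν :=
    Measure.prod_apply_symm hNmeas
  have h2 : ∫⁻ y, μ ((fun x => (x, y)) ⁻¹' N) ∂ν = 0 := h1.symm.trans hN0
  rw [lintegral_eq_zero_iff (measurable_measure_prodMk_right hNmeas)] at h2
  haveI : (ae ν).NeBot := ae_neBot.2 (IsProbabilityMeasure.ne_zero ν)
  obtain ⟨y₀, hy₀⟩ := h2.exists
  refine ⟨fun x => φ (x, y₀), hφ.comp (measurable_prodMk_right), ?_⟩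
  have hsub : {x | ¬ f x = φ (x, y₀)} ⊆ (fun x => (x, y₀)) ⁻¹' N := fun x hx =>
    subset_toMeasurable _ _ hx
  exact ae_iff.2 (measure_mono_null hsub hy₀)

lemma map_prodMap_id {μ : Measure α} {ν : Measure β} [SFinite μ] [SFinite ν] {f : α → γ}
    (hf : AEMeasurable f μ) :
    Measure.map (fun p : α × β => (f p.1, p.2)) (μ.prod ν) = (Measure.map f μ).prod ν := by
  have h2 : (fun p : α × β => (f p.1, p.2)) =ᵐ[μ.prod ν]
      (fun p : α × β => (hf.mk f p.1, p.2)) := by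
    have hnull : (μ.prod ν) (Prod.fst ⁻¹' (toMeasurable μ {x | f x ≠ hf.mk f x})) = 0 := by
      rw [← Measure.map_apply measurable_fst (measurableSet_toMeasurable _ _),
        Measure.map_fst_prod]
      simp only [Measure.smul_apply, smul_eq_mul, measure_toMeasurable]
      have h0 : μ {x | f x ≠ hf.mk f x} = 0 := hf.ae_eq_mk
      rw [h0, mul_zero]
    refine ae_iff.2 (measure_mono_null ?_ hnull)
    intro p hp
    have : f p.1 ≠ hf.mk f p.1 := by
      intro hcontra
      exact hp (by simp [hcontra])
    exact subset_toMeasurable _ _ this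
  rw [Measure.map_congr h2]
  have h3 := (Measure.map_prod_map (f := hf.mk f) (g := (id : β → β)) μ ν
    hf.measurable_mk measurable_id).symm
  have h4 : (Prod.map (hf.mk f) (id : β → β)) = fun p : α × β => (hf.mk f p.1, p.2) := rfl
  rw [h4] at h3
  rw [h3, Measure.map_id, Measure.map_congr hf.ae_eq_mk]

end Helpers

section Haar

variable {U : Type*} [AddCommGroup U] [TopologicalSpace U] [IsTopologicalAddGroup U]
    [MeasurableSpace U] [BorelSpace U]

lemma map_add_prod_of_haar (μU : Measure U) [IsProbabilityMeasure μU] [μU.IsAddHaarMeasure]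
    (ν : Measure U) [IsProbabilityMeasure ν]
    (hα : AEMeasurable (fun q : U × U => q.1 + q.2) (μU.prod ν)) :
    Measure.map (fun q : U × U => q.1 + q.2) (μU.prod ν) = μU := by
  set α : U × U → U := fun q => q.1 + q.2 with hαdef
  set α' := hα.mk α with hα'def
  have hmeas : Measurable α' := hα.measurable_mk
  rw [Measure.map_congr hα.ae_eq_mk]
  ext B hB
  rw [Measure.map_apply hmeas hB, Measure.prod_apply_symm (hmeas hB)]
  set N := toMeasurable (μU.prod ν) {q : U × U | α q ≠ α' q} with hNdef
  have hNmeas : MeasurableSet N := measurableSet_toMeasurable _ _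
  have hN0 : (μU.prod ν) N = 0 := by
    rw [hNdef, measure_toMeasurable]
    exact hα.ae_eq_mk
  have h1 : (μU.prod ν) N = ∫⁻ y, μU ((fun x => (x, y)) ⁻¹' N) ∂ν :=
    Measure.prod_apply_symm hNmeas
  have h2 : ∫⁻ y, μU ((fun x => (x, y)) ⁻¹' N) ∂ν = 0 := h1.symm.trans hN0
  rw [lintegral_eq_zero_iff (measurable_measure_prodMk_right hNmeas)] at h2
  have hcalc : ∫⁻ y, μU ((fun x => (x, y)) ⁻¹' (α' ⁻¹' B)) ∂ν = ∫⁻ y, μU B ∂ν := by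
    refine lintegral_congr_ae ?_
    filter_upwards [h2] with y hy
    have hae : ∀ᵐ x ∂μU, α' (x, y) = x + y := by
      refine ae_iff.2 (measure_mono_null ?_ hy)
      intro x hx
      refine subset_toMeasurable _ _ ?_
      simp only [Set.mem_setOf_eq, hαdef]
      intro hcontra
      exact hx (by simpa using hcontra.symm)
    have hsets : ((fun x => (x, y)) ⁻¹' (α' ⁻¹' B)) =ᵐ[μU] ((fun x : U => x + y) ⁻¹' B) := by
      filter_upwards [hae] with x hx
      show ((α' (x, y) ∈ B) = (x + y ∈ B))
      rw [hx]
    rw [measure_congr hsets]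
    have hcomm : ((fun x : U => x + y) ⁻¹' B) = ((fun x : U => y + x) ⁻¹' B) := by
      ext x; simp [add_comm]
    rw [hcomm]
    exact measure_preimage_add μU y B
  rw [hcalc]
  simp

end Haar

/-- If, under `μ_U ⊗ ν`, the pairs `(g₀, g₀+g₁)` and `(g₀+g₁, g₀)` have the same
distribution, then the random-walk law on `U^(𝔽₂^(⊕ℕ))` is also invariant under each
bit-flip `σᵢ : v ↦ v + eᵢ` acting by `(σᵢ·ω)(v) = ω(v + eᵢ)`. -/
theorem randomWalkLaw_bitFlip_invariant (U : Type*) [AddCommGroup U]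
    [TopologicalSpace U] [IsTopologicalAddGroup U] [CompactSpace U]
    [MeasurableSpace U] [BorelSpace U]
    (μU : Measure U) [IsProbabilityMeasure μU] [μU.IsAddHaarMeasure]
    (ν : Measure U) [IsProbabilityMeasure ν]
    (P : Measure (ℕ → U)) (hP : IsIIDProduct ν P)
    (hsym : Measure.map (fun q : U × U => (q.1, q.1 + q.2)) (μU.prod ν) =
      Measure.map (fun q : U × U => (q.1 + q.2, q.1)) (μU.prod ν)) :
    ∀ i : ℕ,
      Measure.map
          (fun ω : (ℕ →₀ ZMod 2) → U => fun v => ω (v + Finsupp.single i 1))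
          (Measure.map (randomWalkMap U) (μU.prod P)) =
        Measure.map (randomWalkMap U) (μU.prod P) := by
  intro i
  classical
  haveI hPprob : IsProbabilityMeasure P := hP.1
  by_cases hW : AEMeasurable (randomWalkMap U) (μU.prod P)
  swap
  · rw [Measure.map_of_not_aemeasurable hW]
    simp
  · set Ψ : (U × U) × (ℕ → U) → U × (ℕ → U) :=
      fun p => (p.1.1, Function.update p.2 i p.1.2) with hΨdef
    have hΨ : Measurable Ψ := by
      refine Measurable.prodMk (measurable_fst.comp measurable_fst) ?_
      refine measurable_pi_lambda _ fun j => ?_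
      have hupd : (fun p : (U × U) × (ℕ → U) => Function.update p.2 i p.1.2 j)
          = fun p => if j = i then p.1.2 else p.2 j := by
        funext p; rw [Function.update_apply]
      rw [hupd]
      by_cases hj : j = i
      · simpa [hj] using (show Measurable fun p : (U × U) × (ℕ → U) => p.1.2 from measurable_snd.comp measurable_fst)
      · simpa [hj] using (show Measurable fun p : (U × U) × (ℕ → U) => p.2 j from (measurable_pi_apply j).comp measurable_snd)
    set ρ : Measure ((U × U) × (ℕ → U)) := (μU.prod ν).prod P with hρdef
    -- cylinder π-system on ℕ → U
    set 𝒞 : Set (Set (ℕ → U)) := {C | ∃ s : Finset ℕ, ∃ B : ℕ → Set U,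
      (∀ j, MeasurableSet (B j)) ∧ C = {h : ℕ → U | ∀ j ∈ s, h j ∈ B j}} with h𝒞def
    have hcylmeas : ∀ (s : Finset ℕ) (B : ℕ → Set U), (∀ j, MeasurableSet (B j)) →
        MeasurableSet {h : ℕ → U | ∀ j ∈ s, h j ∈ B j} := by
      intro s B hB
      have hrw : {h : ℕ → U | ∀ j ∈ s, h j ∈ B j}
          = ⋂ j ∈ (s : Set ℕ), (fun h : ℕ → U => h j) ⁻¹' B j := by
        ext h; simp
      rw [hrw]
      exact MeasurableSet.biInter (Finset.countable_toSet s)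
        (fun j _ => (measurable_pi_apply j) (hB j))
    have h𝒞gen : (inferInstance : MeasurableSpace (ℕ → U)) = MeasurableSpace.generateFrom 𝒞 := by
      refine le_antisymm ?_ ?_
      · refine iSup_le fun j => ?_
        rintro S ⟨B, hB, rfl⟩
        refine MeasurableSpace.measurableSet_generateFrom ?_
        refine ⟨{j}, fun _ => B, fun _ => hB, ?_⟩
        ext h; simp
      · refine MeasurableSpace.generateFrom_le ?_
        rintro C ⟨s, B, hB, rfl⟩
        exact hcylmeas s B hB
    have h𝒞pi : IsPiSystem 𝒞 := by
      rintro C₁ ⟨s₁, B₁, hB₁, rfl⟩ C₂ ⟨s₂, B₂, hB₂, rfl⟩ -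
      refine ⟨s₁ ∪ s₂, fun j =>
        (if j ∈ s₁ then B₁ j else Set.univ) ∩ (if j ∈ s₂ then B₂ j else Set.univ),
        fun j => MeasurableSet.inter
          (by split_ifs; exacts [hB₁ j, MeasurableSet.univ])
          (by split_ifs; exacts [hB₂ j, MeasurableSet.univ]), ?_⟩
      ext h
      simp only [Set.mem_inter_iff, Set.mem_setOf_eq, Finset.mem_union]
      constructor
      · rintro ⟨h1, h2⟩ j hj
        constructor
        · split_ifs with hj1
          · exact h1 j hj1
          · exact Set.mem_univ _
        · split_ifs with hj2
          · exact h2 j hj2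
          · exact Set.mem_univ _
      · intro H
        constructor
        · intro j hj
          have := (H j (Or.inl hj)).1
          rwa [if_pos hj] at this
        · intro j hj
          have := (H j (Or.inr hj)).2
          rwa [if_pos hj] at this
    have h𝒞span : IsCountablySpanning 𝒞 :=
      ⟨fun _ => Set.univ, fun _ => ⟨∅, fun _ => Set.univ, fun _ => MeasurableSet.univ,
        by ext h; simp⟩, Set.iUnion_const _⟩
    have hgen2 : (inferInstance : MeasurableSpace (U × (ℕ → U))) =
        MeasurableSpace.generateFrom (Set.image2 (· ×ˢ ·) {A : Set U | MeasurableSet A} 𝒞) :=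
      (generateFrom_eq_prod MeasurableSpace.generateFrom_measurableSet h𝒞gen.symm
        isCountablySpanning_measurableSet h𝒞span).symm
    haveI hρprob : IsProbabilityMeasure ρ := by rw [hρdef]; infer_instance
    haveI hQprob : IsProbabilityMeasure (Measure.map Ψ ρ) :=
      Measure.isProbabilityMeasure_map hΨ.aemeasurable
    have hQ : Measure.map Ψ ρ = μU.prod P := by
      refine ext_of_generate_finite _ hgen2 (IsPiSystem.prod MeasurableSpace.isPiSystem_measurableSet h𝒞pi) ?_ ?_
      · rintro E ⟨A, hA, C, ⟨s, B, hB, rfl⟩, rfl⟩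
        have hA' : MeasurableSet A := hA
        have hCm := hcylmeas s B hB
        rw [Measure.map_apply hΨ (hA'.prod hCm)]
        have hpre : Ψ ⁻¹' (A ×ˢ {h : ℕ → U | ∀ j ∈ s, h j ∈ B j}) =
            (A ×ˢ (if i ∈ s then B i else Set.univ)) ×ˢ
              {h : ℕ → U | ∀ j ∈ s.erase i, h j ∈ B j} := by
          ext p
          obtain ⟨⟨a, b⟩, g⟩ := p
          simp only [Set.mem_preimage, Set.mem_prod, Set.mem_setOf_eq, hΨdef]
          constructor
          · rintro ⟨ha, hupd⟩
            refine ⟨⟨ha, ?_⟩, fun j hj => ?_⟩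
            · split_ifs with hi
              · have := hupd i hi
                rwa [Function.update_self] at this
              · exact Set.mem_univ _
            · have hji : j ≠ i := Finset.ne_of_mem_erase hj
              have := hupd j (Finset.mem_of_mem_erase hj)
              rwa [Function.update_of_ne hji] at this
          · rintro ⟨⟨ha, hb⟩, hg⟩
            refine ⟨ha, fun j hj => ?_⟩
            by_cases hji : j = i
            · subst hji
              rw [Function.update_self]
              rw [if_pos hj] at hb
              exact hb
            · rw [Function.update_of_ne hji]
              exact hg j (Finset.mem_erase.2 ⟨hji, hj⟩)
        have hL : ρ ((A ×ˢ (if i ∈ s then B i else Set.univ)) ×ˢ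
            {h : ℕ → U | ∀ j ∈ s.erase i, h j ∈ B j}) =
            μU A * ν (if i ∈ s then B i else Set.univ) * ∏ j ∈ s.erase i, ν (B j) := by
          rw [hρdef, Measure.prod_prod, Measure.prod_prod, hP.2 (s.erase i) B hB]
        have hR : (μU.prod P) (A ×ˢ {h : ℕ → U | ∀ j ∈ s, h j ∈ B j}) =
            μU A * ∏ j ∈ s, ν (B j) := by
          rw [Measure.prod_prod, hP.2 s B hB]
        rw [hpre, hL, hR]
        by_cases hi : i ∈ s
        · rw [if_pos hi, ← Finset.mul_prod_erase s (fun j => ν (B j)) hi, mul_assoc]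
        · rw [if_neg hi, Finset.erase_eq_of_notMem hi, measure_univ, mul_one]
      · simp [measure_univ]
    -- aemeasurability facts
    have hWQ : AEMeasurable (randomWalkMap U) (Measure.map Ψ ρ) := by rw [hQ]; exact hW
    have hF : AEMeasurable (randomWalkMap U ∘ Ψ) ρ := hWQ.comp_measurable hΨ
    have hα : AEMeasurable (fun q : U × U => q.1 + q.2) (μU.prod ν) := by
      refine aemeasurable_of_comp_fst (ν := P) ?_
      show AEMeasurable (fun p : (U × U) × (ℕ → U) => p.1.1 + p.1.2) ((μU.prod ν).prod P)
      have h1 : AEMeasurable (fun p : (U × U) × (ℕ → U) =>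
          randomWalkMap U (Ψ p) (Finsupp.single i 1)) ρ :=
        (measurable_pi_apply (Finsupp.single i 1)).comp_aemeasurable hF
      have hfun : (fun p : (U × U) × (ℕ → U) => p.1.1 + p.1.2)
          = fun p : (U × U) × (ℕ → U) => randomWalkMap U (Ψ p) (Finsupp.single i 1) := by
        funext p
        simp only [randomWalkMap, hΨdef]
        rw [Finsupp.support_single_ne_zero i one_ne_zero, Finset.sum_singleton,
          Function.update_self]
      rw [hfun]
      exact h1
    set f₁ : U × U → U × U := fun q => (q.1, q.1 + q.2) with hf₁def
    set f₂ : U × U → U × U := fun q => (q.1 + q.2, q.1) with hf₂def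
    have hf₁ : AEMeasurable f₁ (μU.prod ν) := measurable_fst.aemeasurable.prodMk hα
    have hf₂ : AEMeasurable f₂ (μU.prod ν) := hα.prodMk measurable_fst.aemeasurable
    set lam : Measure (U × U) := Measure.map f₁ (μU.prod ν) with hlamdef
    haveI hlamprob : IsProbabilityMeasure lam := by
      rw [hlamdef]; exact Measure.isProbabilityMeasure_map hf₁
    have hsnd : Measure.map Prod.snd lam = μU := by
      rw [hlamdef, AEMeasurable.map_map_of_aemeasurable measurable_snd.aemeasurable hf₁]
      have hco : (Prod.snd ∘ f₁) = fun q : U × U => q.1 + q.2 := rfl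
      rw [hco]
      exact map_add_prod_of_haar μU ν hα
    have hfst : Measure.map Prod.fst lam = μU := by
      rw [hlamdef, AEMeasurable.map_map_of_aemeasurable measurable_fst.aemeasurable hf₁]
      have hco : (Prod.fst ∘ f₁) = (Prod.fst : U × U → U) := rfl
      rw [hco, Measure.map_fst_prod, measure_univ, one_smul]
    -- support of v + e_i
    have hZ2 : ∀ x : ZMod 2, x + 1 ≠ 0 ↔ x = 0 := by decide
    have hsupp : ∀ v : ℕ →₀ ZMod 2, (v + Finsupp.single i 1).support =
        if i ∈ v.support then v.support.erase i else insert i v.support := by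
      intro v
      ext j
      rw [Finsupp.mem_support_iff, Finsupp.add_apply]
      by_cases hj : j = i
      · subst hj
        rw [Finsupp.single_eq_same]
        by_cases hv : v j = 0
        · simp [hv, Finsupp.mem_support_iff]
        · have hj' : j ∈ v.support := Finsupp.mem_support_iff.2 hv
          simp [hZ2, hv, hj']
      · rw [Finsupp.single_eq_of_ne hj, add_zero]
        by_cases hv : i ∈ v.support
        · simp [hv, Finset.mem_erase, hj, Finsupp.mem_support_iff]
        · simp [hv, Finset.mem_insert, hj, Finsupp.mem_support_iff]
    -- the two-coordinate representation
    set G : (U × U) × (ℕ → U) → ((ℕ →₀ ZMod 2) → U) := fun p v =>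
      (if i ∈ v.support then p.1.2 else p.1.1) + ∑ j ∈ v.support.erase i, p.2 j with hGdef
    have hG : AEMeasurable G (lam.prod P) := by
      refine aemeasurable_pi_of_forall fun v => ?_
      by_cases hv : i ∈ v.support
      · have hco : (fun p : (U × U) × (ℕ → U) => G p v) =
            (fun q : U × (ℕ → U) => randomWalkMap U q (v + Finsupp.single i 1)) ∘
              (Prod.map (Prod.snd : U × U → U) (id : (ℕ → U) → (ℕ → U))) := by
          funext p
          simp only [hGdef, Function.comp_apply, Prod.map, randomWalkMap, if_pos hv, id]
          rw [hsupp v, if_pos hv]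
        rw [hco]
        refine AEMeasurable.comp_measurable ?_ (measurable_snd.prodMap measurable_id)
        rw [← Measure.map_prod_map _ _ measurable_snd measurable_id, Measure.map_id, hsnd]
        exact (measurable_pi_apply (v + Finsupp.single i 1)).comp_aemeasurable hW
      · have hco : (fun p : (U × U) × (ℕ → U) => G p v) =
            (fun q : U × (ℕ → U) => randomWalkMap U q v) ∘
              (Prod.map (Prod.fst : U × U → U) (id : (ℕ → U) → (ℕ → U))) := by
          funext p
          simp only [hGdef, Function.comp_apply, Prod.map, randomWalkMap, if_neg hv, id]
          rw [Finset.erase_eq_of_notMem hv]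
        rw [hco]
        refine AEMeasurable.comp_measurable ?_ (measurable_fst.prodMap measurable_id)
        rw [← Measure.map_prod_map _ _ measurable_fst measurable_id, Measure.map_id, hfst]
        exact (measurable_pi_apply v).comp_aemeasurable hW
    -- pointwise identities
    have hid1 : (randomWalkMap U ∘ Ψ) = fun p : (U × U) × (ℕ → U) => G (f₁ p.1, p.2) := by
      funext p
      funext v
      simp only [Function.comp_apply, randomWalkMap, hΨdef, hGdef, hf₁def]
      by_cases hv : i ∈ v.support
      · rw [if_pos hv, ← Finset.add_sum_erase _ _ hv, Function.update_self, ← add_assoc]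
        congr 1
        exact Finset.sum_congr rfl fun j hj =>
          Function.update_of_ne (Finset.ne_of_mem_erase hj) _ _
      · rw [if_neg hv, Finset.erase_eq_of_notMem hv]
        congr 1
        exact Finset.sum_congr rfl fun j hj =>
          Function.update_of_ne (fun h => hv (by rw [← h]; exact hj)) _ _
    have hid2 : ((fun ω : (ℕ →₀ ZMod 2) → U => fun v => ω (v + Finsupp.single i 1)) ∘
        (randomWalkMap U ∘ Ψ)) = fun p : (U × U) × (ℕ → U) => G (f₂ p.1, p.2) := by
      funext p
      funext v
      simp only [Function.comp_apply, randomWalkMap, hΨdef, hGdef, hf₂def]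
      rw [hsupp v]
      by_cases hv : i ∈ v.support
      · rw [if_pos hv, if_pos hv]
        congr 1
        exact Finset.sum_congr rfl fun j hj =>
          Function.update_of_ne (Finset.ne_of_mem_erase hj) _ _
      · rw [if_neg hv, if_neg hv, Finset.sum_insert hv, Function.update_self,
          Finset.erase_eq_of_notMem hv, ← add_assoc]
        congr 1
        exact Finset.sum_congr rfl fun j hj =>
          Function.update_of_ne (fun h => hv (by rw [← h]; exact hj)) _ _
    -- pushforwards of the product maps
    have hmap1 : Measure.map (fun p : (U × U) × (ℕ → U) => (f₁ p.1, p.2)) ρ = lam.prod P := by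
      rw [hρdef, hlamdef]
      exact map_prodMap_id hf₁
    have hmap2 : Measure.map (fun p : (U × U) × (ℕ → U) => (f₂ p.1, p.2)) ρ =
        (Measure.map f₂ (μU.prod ν)).prod P := by
      rw [hρdef]
      exact map_prodMap_id hf₂
    have hpm1 : AEMeasurable (fun p : (U × U) × (ℕ → U) => (f₁ p.1, p.2)) ρ := by
      refine AEMeasurable.prodMk ?_ measurable_snd.aemeasurable
      have hcomp : AEMeasurable (f₁ ∘ (Prod.fst : (U × U) × (ℕ → U) → U × U)) ρ := by
        refine AEMeasurable.comp_measurable ?_ measurable_fst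
        rw [hρdef, Measure.map_fst_prod, measure_univ, one_smul]
        exact hf₁
      exact hcomp
    have hpm2 : AEMeasurable (fun p : (U × U) × (ℕ → U) => (f₂ p.1, p.2)) ρ := by
      refine AEMeasurable.prodMk ?_ measurable_snd.aemeasurable
      have hcomp : AEMeasurable (f₂ ∘ (Prod.fst : (U × U) × (ℕ → U) → U × U)) ρ := by
        refine AEMeasurable.comp_measurable ?_ measurable_fst
        rw [hρdef, Measure.map_fst_prod, measure_univ, one_smul]
        exact hf₂
      exact hcomp
    have hflip : Measurable (fun ω : (ℕ →₀ ZMod 2) → U => fun v => ω (v + Finsupp.single i 1)) :=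
      measurable_pi_lambda _ fun v => measurable_pi_apply _
    -- right-hand chain
    have chainR : Measure.map (randomWalkMap U) (μU.prod P) = Measure.map G (lam.prod P) := by
      conv_lhs => rw [← hQ]
      rw [AEMeasurable.map_map_of_aemeasurable hWQ hΨ.aemeasurable, hid1]
      have hsplit : (fun p : (U × U) × (ℕ → U) => G (f₁ p.1, p.2)) =
          G ∘ (fun p : (U × U) × (ℕ → U) => (f₁ p.1, p.2)) := rfl
      have hGm1 : AEMeasurable G
          (Measure.map (fun p : (U × U) × (ℕ → U) => (f₁ p.1, p.2)) ρ) := by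
        rw [hmap1]; exact hG
      rw [hsplit, ← AEMeasurable.map_map_of_aemeasurable hGm1 hpm1, hmap1]
    -- left-hand chain
    have chainL : Measure.map
        (fun ω : (ℕ →₀ ZMod 2) → U => fun v => ω (v + Finsupp.single i 1))
        (Measure.map (randomWalkMap U) (μU.prod P)) =
        Measure.map G ((Measure.map f₂ (μU.prod ν)).prod P) := by
      conv_lhs => rw [← hQ]
      rw [AEMeasurable.map_map_of_aemeasurable hWQ hΨ.aemeasurable,
        AEMeasurable.map_map_of_aemeasurable hflip.aemeasurable hF, hid2]
      have hsplit : (fun p : (U × U) × (ℕ → U) => G (f₂ p.1, p.2)) =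
          G ∘ (fun p : (U × U) × (ℕ → U) => (f₂ p.1, p.2)) := rfl
      have hGm2 : AEMeasurable G
          (Measure.map (fun p : (U × U) × (ℕ → U) => (f₂ p.1, p.2)) ρ) := by
        rw [hmap2, ← hsym]; exact hG
      rw [hsplit, ← AEMeasurable.map_map_of_aemeasurable hGm2 hpm2, hmap2]
    rw [chainL, chainR, ← hsym]
end
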